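/- Define rho : M_n(N) -> ℕ by rho(x) = rank(<x>), where <x> is the non-increasing sequence of length n listing the elements of the multiset x. Then rho is injective and order-preserving with respect to strict max-min-fair comparison: for all x, y in M_n(N), x ≺mmf y if and only if rho(x) < rho(y). -/

import Mathlib

/-- Strict lexicographic order: `s <lex t` iff there is an index `j` with
`s i = t i` for all `i < j` and `s j < t j`. -/
def LexLt {n : ℕ} (s t : Fin n → ℕ) : Prop :=
  ∃ j : Fin n, (∀ i, i < j → s i = t i) ∧ s j < t j

/-- `rank(s) = ∑_{i=1}^n C(n + x_i - i, x_i - 1)`, where a summand with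
`x_i = 0` is taken to be `0` (indices `i : Fin n` are 0-based, so `i+1` is the
1-based position). -/
def rank {n : ℕ} (s : Fin n → ℕ) : ℕ :=
  ∑ i : Fin n, if s i = 0 then 0 else Nat.choose (n + s i - ((i : ℕ) + 1)) (s i - 1)

/-- `⟨x⟩`: the non-increasing sequence of length `n` listing the elements of a
multiset `x` of cardinality `n` (entry at position `i`). -/
def descSeq (n : ℕ) (x : Multiset ℕ) : Fin n → ℕ :=
  fun i => (Multiset.sort x (· ≥ ·)).getD i 0

open Finset

def F (m : ℕ) : ℕ → ℕ
  | 0 => 0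
  | (y+1) => Nat.choose (m + y) y

lemma F_mono (m : ℕ) : Monotone (F m) := by
  apply monotone_nat_of_le_succ
  intro v
  cases v with
  | zero => simp [F]
  | succ w =>
    show Nat.choose (m + w) w ≤ F m (w + 2)
    have : F m (w + 2) = Nat.choose (m + (w+1)) (w+1) := rfl
    rw [this, show m + (w+1) = (m+w)+1 by omega, Nat.choose_succ_succ]
    omega

lemma F_pascal (m v : ℕ) : F (m+1) v + F m (v+1) = F (m+1) (v+1) := by
  cases v with
  | zero => simp [F]
  | succ w =>
    show Nat.choose (m+1+w) w + Nat.choose (m+(w+1)) (w+1) = Nat.choose ((m+1)+(w+1)) (w+1)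
    rw [show m+1+w = (m+w)+1 by omega, show m+(w+1) = (m+w)+1 by omega,
        show (m+1)+(w+1) = ((m+w)+1)+1 by omega, Nat.choose_succ_succ ((m+w)+1) w]

lemma tail_lt (v : ℕ) : ∀ (m : ℕ) (s : ℕ → ℕ), (∀ i, i < m → s i ≤ v) →
    ∑ i ∈ range m, F (m - i) (s i) < F m (v+1) := by
  intro m
  induction m with
  | zero =>
    intro s _
    simp [F, Nat.choose_self]
  | succ m ih =>
    intro s h
    rw [Finset.sum_range_succ']
    have key : ∑ i ∈ range m, F (m + 1 - (i+1)) (s (i+1)) = ∑ i ∈ range m, F (m - i) (s (i+1)) := by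
      apply sum_congr rfl; intro i _; congr 1; omega
    rw [key]
    have h1 : ∑ i ∈ range m, F (m - i) (s (i+1)) < F m (v+1) :=
      ih (fun i => s (i+1)) (fun i hi => h (i+1) (by omega))
    have h2 : F (m + 1 - 0) (s 0) ≤ F (m+1) v := by
      have : m + 1 - 0 = m + 1 := rfl
      rw [this]
      exact F_mono (m+1) (h 0 (by omega))
    have := F_pascal m v
    omega

def extSeq (n : ℕ) (s : Fin n → ℕ) (i : ℕ) : ℕ := if h : i < n then s ⟨i, h⟩ else 0

lemma rank_eq {n : ℕ} (s : Fin n → ℕ) :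
    rank s = ∑ i ∈ range n, F (n - i) (extSeq n s i) := by
  rw [rank, ← Fin.sum_univ_eq_sum_range (fun i => F (n - i) (extSeq n s i)) n]
  apply sum_congr rfl
  intro i _
  have hi : (i : ℕ) < n := i.isLt
  have hext : extSeq n s i = s i := by simp [extSeq, hi]
  rw [hext]
  cases hsi : s i with
  | zero => simp [F]
  | succ y =>
    show Nat.choose (n + (y+1) - ((i:ℕ)+1)) y = Nat.choose ((n - (i:ℕ)) + y) y
    congr 1
    omega

lemma rank_lt_of_lex {n : ℕ} (s t : Fin n → ℕ)
    (hs : ∀ i j : Fin n, i ≤ j → s j ≤ s i) (hlex : LexLt s t) :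
    rank s < rank t := by
  obtain ⟨j, hpre, hj⟩ := hlex
  have hJn : (j : ℕ) ≤ n := le_of_lt j.isLt
  rw [rank_eq, rank_eq]
  have hsplit : ∀ u : ℕ → ℕ, ∑ i ∈ range n, F (n - i) (u i) =
      (∑ i ∈ range (j : ℕ), F (n - i) (u i)) + ∑ i ∈ Ico (j : ℕ) n, F (n - i) (u i) := by
    intro u
    rw [range_eq_Ico, range_eq_Ico]
    exact (Finset.sum_Ico_consecutive (fun i => F (n - i) (u i)) (Nat.zero_le (j:ℕ)) hJn).symm
  rw [hsplit, hsplit]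
  have hprefix : ∑ i ∈ range (j : ℕ), F (n - i) (extSeq n s i)
      = ∑ i ∈ range (j : ℕ), F (n - i) (extSeq n t i) := by
    apply sum_congr rfl
    intro i hi
    have hij : i < (j : ℕ) := mem_range.mp hi
    have hin : i < n := by omega
    have : s ⟨i, hin⟩ = t ⟨i, hin⟩ := hpre ⟨i, hin⟩ (by simp [Fin.lt_def, hij])
    simp [extSeq, hin, this]
  have htails : ∑ i ∈ Ico (j : ℕ) n, F (n - i) (extSeq n s i) < F (n - (j:ℕ)) (s j + 1) := by
    rw [Finset.sum_Ico_eq_sum_range]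
    have hre : ∑ i ∈ range (n - (j:ℕ)), F (n - ((j:ℕ) + i)) (extSeq n s ((j:ℕ) + i))
        = ∑ i ∈ range (n - (j:ℕ)), F ((n - (j:ℕ)) - i) (extSeq n s ((j:ℕ) + i)) := by
      apply sum_congr rfl; intro i _; congr 1; omega
    rw [hre]
    exact tail_lt (s j) (n - (j:ℕ)) (fun i => extSeq n s ((j:ℕ) + i)) (by
      intro i hi
      show extSeq n s ((j:ℕ) + i) ≤ s j
      have hin : (j:ℕ) + i < n := by omega
      have : extSeq n s ((j:ℕ) + i) = s ⟨(j:ℕ) + i, hin⟩ := by simp [extSeq, hin]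
      rw [this]
      exact hs j ⟨(j:ℕ)+i, hin⟩ (by simp [Fin.le_def]))
  have hstep : F (n - (j:ℕ)) (s j + 1) ≤ F (n - (j:ℕ)) (t j) := F_mono _ hj
  have htailt : F (n - (j:ℕ)) (t j) ≤ ∑ i ∈ Ico (j : ℕ) n, F (n - i) (extSeq n t i) := by
    have hmem : (j : ℕ) ∈ Ico (j : ℕ) n := by simp [j.isLt]
    have : F (n - (j:ℕ)) (extSeq n t (j:ℕ)) ≤ ∑ i ∈ Ico (j : ℕ) n, F (n - i) (extSeq n t i) :=
      Finset.single_le_sum (f := fun i => F (n - i) (extSeq n t i)) (fun i _ => Nat.zero_le _) hmem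
    simpa [extSeq, j.isLt] using this
  omega

lemma lex_trichotomy {n : ℕ} (s t : Fin n → ℕ) (hne : s ≠ t) :
    LexLt s t ∨ LexLt t s := by
  classical
  have hex : ∃ i, s i ≠ t i := by
    by_contra h
    push_neg at h
    exact hne (funext h)
  obtain ⟨i0, hi0⟩ := hex
  set S := Finset.univ.filter (fun i => s i ≠ t i) with hS
  have hSne : S.Nonempty := ⟨i0, by simp [hS, hi0]⟩
  obtain ⟨j, hjS, hjmin⟩ := S.exists_min_image id hSne
  have hjne : s j ≠ t j := by simpa [hS] using hjS
  have hpre : ∀ i, i < j → s i = t i := by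
    intro i hij
    by_contra hne'
    exact absurd (hjmin i (by simp [hS, hne'])) (not_le.mpr hij)
  rcases lt_or_gt_of_ne hjne with h | h
  · exact Or.inl ⟨j, hpre, h⟩
  · exact Or.inr ⟨j, fun i hi => (hpre i hi).symm, h⟩

lemma descSeq_anti {n : ℕ} (x : Multiset ℕ) (hx : Multiset.card x = n) :
    ∀ i j : Fin n, i ≤ j → descSeq n x j ≤ descSeq n x i := by
  intro i j hij
  set l := Multiset.sort x (· ≥ ·) with hl
  have hlen : l.length = n := by rw [hl, Multiset.length_sort, hx]
  have hsort : l.Pairwise (· ≥ ·) := Multiset.pairwise_sort _ _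
  have hi : (i : ℕ) < l.length := by rw [hlen]; exact i.isLt
  have hj : (j : ℕ) < l.length := by rw [hlen]; exact j.isLt
  have hdi : descSeq n x i = l.get ⟨i, hi⟩ := by
    simp [descSeq, ← hl, List.getElem?_eq_getElem hi]
  have hdj : descSeq n x j = l.get ⟨j, hj⟩ := by
    simp [descSeq, ← hl, List.getElem?_eq_getElem hj]
  rw [hdi, hdj]
  rcases eq_or_lt_of_le hij with heq | hlt
  · subst heq; exact le_refl _
  · have hlt' : (i : ℕ) < (j : ℕ) := hlt
    exact hsort.rel_get_of_lt (Fin.mk_lt_mk.mpr hlt')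

lemma descSeq_inj {n : ℕ} (x y : Multiset ℕ) (hx : Multiset.card x = n)
    (hy : Multiset.card y = n) (h : descSeq n x = descSeq n y) : x = y := by
  set lx := Multiset.sort x (· ≥ ·) with hlx
  set ly := Multiset.sort y (· ≥ ·) with hly
  have hlenx : lx.length = n := by rw [hlx, Multiset.length_sort, hx]
  have hleny : ly.length = n := by rw [hly, Multiset.length_sort, hy]
  have hll : lx = ly := by
    apply List.ext_getElem (by omega)
    intro i h1 h2
    have hfun := congrFun h ⟨i, by omega⟩
    simpa [descSeq, ← hlx, ← hly, List.getElem?_eq_getElem h1,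
      List.getElem?_eq_getElem h2] using hfun
  have := Multiset.sort_eq x (· ≥ ·)
  have := Multiset.sort_eq y (· ≥ ·)
  calc x = (lx : Multiset ℕ) := (Multiset.sort_eq x _).symm
    _ = (ly : Multiset ℕ) := by rw [hll]
    _ = y := Multiset.sort_eq y _

/-- `ρ(x) = rank ⟨x⟩` is injective on multisets of cardinality `n` over
`{0,...,k}` and order-preserving w.r.t. the strict max-min-fair comparison:
`x ≺mmf y ↔ ρ x < ρ y` (where `x ≺mmf y` iff `⟨x⟩ <lex ⟨y⟩`). -/
theorem rho_iso (k n : ℕ) (x y : Multiset ℕ)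
    (hx : Multiset.card x = n) (hy : Multiset.card y = n)
    (hxk : ∀ a ∈ x, a ≤ k) (hyk : ∀ a ∈ y, a ≤ k) :
    (LexLt (descSeq n x) (descSeq n y) ↔
      rank (descSeq n x) < rank (descSeq n y)) ∧
    (rank (descSeq n x) = rank (descSeq n y) → x = y) := by
  have hax := descSeq_anti x hx
  have hay := descSeq_anti y hy
  constructor
  · constructor
    · exact fun h => rank_lt_of_lex _ _ hax h
    · intro h
      by_cases heq : descSeq n x = descSeq n y
      · rw [heq] at h; exact absurd h (lt_irrefl _)
      · rcases lex_trichotomy _ _ heq with hl | hl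
        · exact hl
        · exact absurd (rank_lt_of_lex _ _ hay hl) (by omega)
  · intro h
    apply descSeq_inj x y hx hy
    by_contra hne
    rcases lex_trichotomy _ _ hne with hl | hl
    · exact absurd (rank_lt_of_lex _ _ hax hl) (by omega)
    · exact absurd (rank_lt_of_lex _ _ hay hl) (by omega)
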